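/- Let d ≥ 1, n ≥ 1, and g₁,…,gₙ ∈ ℝ with g_j < 0 for every j. Let A ∈ ℂ with A ≠ 0, ω ∈ ℝ and k ∈ ℝ^d, and let φ(t,x) = A·exp(i(ωt − k·x)) be the plane wave. Then φ satisfies (□_{g₁} ∘ ⋯ ∘ □_{gₙ})φ = 0 identically on ℝ × ℝ^d if and only if there exists j ∈ {1,…,n} such that ω = ‖k‖/√(−g_j) or ω = −‖k‖/√(−g_j). In particular the solutions are massless plane waves propagating with the n speeds 1/√(−g_j). -/

import Mathlib

/-- Second time derivative: `(∂²φ/∂t²)(t,x)`. -/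
noncomputable def dtt (d : ℕ) (φ : ℝ × EuclideanSpace ℝ (Fin d) → ℂ) :
    ℝ × EuclideanSpace ℝ (Fin d) → ℂ :=
  fun p => deriv (deriv (fun u : ℝ => φ (u, p.2))) p.1

/-- Spatial Laplacian: `Σ_a (∂²φ/∂x_a²)(t,x)`, computed as second directional
derivatives along the coordinate directions. -/
noncomputable def lap (d : ℕ) (φ : ℝ × EuclideanSpace ℝ (Fin d) → ℂ) :
    ℝ × EuclideanSpace ℝ (Fin d) → ℂ :=
  fun p => ∑ a : Fin d,
    deriv (deriv (fun u : ℝ => φ (p.1, p.2 + u • EuclideanSpace.single a (1 : ℝ)))) 0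

/-- The Carrollian operator `□_g φ = g ∂²φ/∂t² + Δφ`. -/
noncomputable def carrollBox (d : ℕ) (g : ℝ) (φ : ℝ × EuclideanSpace ℝ (Fin d) → ℂ) :
    ℝ × EuclideanSpace ℝ (Fin d) → ℂ :=
  fun p => (g : ℂ) * dtt d φ p + lap d φ p

/-- The plane wave `φ(t,x) = A·exp(i(ωt − k·x))`. -/
noncomputable def planeWave (d : ℕ) (A : ℂ) (ω : ℝ) (k : EuclideanSpace ℝ (Fin d)) :
    ℝ × EuclideanSpace ℝ (Fin d) → ℂ :=
  fun p => A * Complex.exp (Complex.I * (((ω * p.1 : ℝ) : ℂ) - ((inner ℝ k p.2 : ℝ) : ℂ)))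

lemma E_hasDeriv (A c b : ℂ) (u : ℝ) :
    HasDerivAt (fun u : ℝ => A * Complex.exp (c * u + b)) (c * (A * Complex.exp (c * u + b))) u := by
  have h1 : HasDerivAt (fun u : ℝ => c * (u : ℂ) + b) c u := by
    simpa using ((Complex.ofRealCLM.hasDerivAt (x := u)).const_mul c).add_const b
  have := (h1.cexp).const_mul A
  rw [show c * (A * Complex.exp (c * u + b)) = A * (Complex.exp (c * u + b) * c) by ring]
  exact this

lemma E_deriv2 (A c b : ℂ) (u : ℝ) :
    deriv (deriv (fun u : ℝ => A * Complex.exp (c * u + b))) u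
      = c ^ 2 * (A * Complex.exp (c * u + b)) := by
  have h : deriv (fun u : ℝ => A * Complex.exp (c * u + b))
      = fun u : ℝ => (c * A) * Complex.exp (c * u + b) := by
    funext v; rw [(E_hasDeriv A c b v).deriv]; ring
  rw [h, (E_hasDeriv (c * A) c b u).deriv]; ring

lemma norm_sq_eq (d : ℕ) (k : EuclideanSpace ℝ (Fin d)) : ‖k‖ ^ 2 = ∑ a, (k a) ^ 2 := by
  rw [EuclideanSpace.norm_eq, Real.sq_sqrt (by positivity)]
  simp [sq_abs]

lemma box_planeWave (d : ℕ) (gv : ℝ) (A : ℂ) (ω : ℝ) (k : EuclideanSpace ℝ (Fin d)) :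
    carrollBox d gv (planeWave d A ω k)
      = planeWave d ((-(gv : ℂ) * (ω : ℂ) ^ 2 - ((‖k‖ ^ 2 : ℝ) : ℂ)) * A) ω k := by
  funext p
  set b : ℂ := Complex.I * (((ω * p.1 : ℝ) : ℂ) - ((inner ℝ k p.2 : ℝ) : ℂ)) with hb
  have hdtt : dtt d (planeWave d A ω k) p = (Complex.I * ω) ^ 2 * (A * Complex.exp b) := by
    have hf : (fun u : ℝ => planeWave d A ω k (u, p.2))
        = fun u : ℝ => A * Complex.exp ((Complex.I * ω) * u + (-(Complex.I * ((inner ℝ k p.2 : ℝ) : ℂ)))) := by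
      funext u; unfold planeWave; congr 1; push_cast; ring
    have e1 : (Complex.I * ω) * (p.1 : ℂ) + (-(Complex.I * ((inner ℝ k p.2 : ℝ) : ℂ))) = b := by
      rw [hb]; push_cast; ring
    rw [dtt, hf, E_deriv2, e1]
  have hlap : lap d (planeWave d A ω k) p
      = (∑ a : Fin d, (-(Complex.I * ((k a : ℝ) : ℂ))) ^ 2) * (A * Complex.exp b) := by
    rw [lap, Finset.sum_mul]
    refine Finset.sum_congr rfl fun a _ => ?_
    have hf : (fun u : ℝ => planeWave d A ω k (p.1, p.2 + u • EuclideanSpace.single a (1 : ℝ)))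
        = fun u : ℝ => A * Complex.exp ((-(Complex.I * ((k a : ℝ) : ℂ))) * u + b) := by
      funext u; unfold planeWave; congr 1
      have : (inner ℝ k (p.2 + u • EuclideanSpace.single a (1:ℝ)) : ℝ) = inner ℝ k p.2 + u * k a := by
        rw [inner_add_right, real_inner_smul_right, EuclideanSpace.inner_single_right]
        simp
      rw [this, hb]; push_cast; ring
    have e2 : (-(Complex.I * ((k a : ℝ) : ℂ))) * ((0 : ℝ) : ℂ) + b = b := by push_cast; ring
    rw [hf, E_deriv2, e2]
  have hsum : (∑ a : Fin d, (-(Complex.I * ((k a : ℝ) : ℂ))) ^ 2) = -((‖k‖ ^ 2 : ℝ) : ℂ) := by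
    have h1 : ∀ x : ℂ, (-(Complex.I * x)) ^ 2 = -(x ^ 2) := fun x => by
      rw [neg_sq, mul_pow, Complex.I_sq]; ring
    simp only [h1]
    rw [Finset.sum_neg_distrib]
    push_cast [norm_sq_eq d k]
    ring
  have hpw : planeWave d ((-(gv : ℂ) * (ω : ℂ) ^ 2 - ((‖k‖ ^ 2 : ℝ) : ℂ)) * A) ω k p
      = (-(gv : ℂ) * (ω : ℂ) ^ 2 - ((‖k‖ ^ 2 : ℝ) : ℂ)) * A * Complex.exp b := rfl
  rw [carrollBox, hdtt, hlap, hsum, hpw, mul_pow, Complex.I_sq]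
  ring

lemma foldr_box_planeWave (d : ℕ) (A : ℂ) (ω : ℝ) (k : EuclideanSpace ℝ (Fin d)) :
    ∀ L : List ℝ, L.foldr (carrollBox d) (planeWave d A ω k)
      = planeWave d ((L.map fun gv : ℝ => -(gv : ℂ) * (ω : ℂ) ^ 2 - ((‖k‖ ^ 2 : ℝ) : ℂ)).prod * A) ω k
  | [] => by simp
  | (gv :: L) => by
      rw [List.foldr_cons, foldr_box_planeWave d A ω k L, box_planeWave, List.map_cons,
        List.prod_cons, mul_assoc]

/-- with all couplings negative, a plane wave with nonzero amplitude
solves `(□_{g₁} ∘ ⋯ ∘ □_{gₙ})φ = 0` iff its frequency obeys one of the `n`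
dispersion relations `ω = ±‖k‖/√(−g_j)`; the solutions are massless plane waves
propagating with the speeds `1/√(−g_j)`. -/
theorem planeWave_solves_iff_dispersion (d : ℕ) (hd : 1 ≤ d) (n : ℕ) (hn : 1 ≤ n)
    (g : Fin n → ℝ) (hneg : ∀ j, g j < 0) (A : ℂ) (hA : A ≠ 0) (ω : ℝ)
    (k : EuclideanSpace ℝ (Fin d)) :
    (∀ p : ℝ × EuclideanSpace ℝ (Fin d),
        (List.ofFn g).foldr (carrollBox d) (planeWave d A ω k) p = 0)
      ↔ ∃ j : Fin n, ω = ‖k‖ / Real.sqrt (-(g j)) ∨ ω = -(‖k‖ / Real.sqrt (-(g j))) := by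
  rw [foldr_box_planeWave]
  set C : ℂ := ((List.ofFn g).map fun gv : ℝ => -(gv : ℂ) * (ω : ℂ) ^ 2 - ((‖k‖ ^ 2 : ℝ) : ℂ)).prod * A
    with hC
  have h1 : (∀ p : ℝ × EuclideanSpace ℝ (Fin d), planeWave d C ω k p = 0) ↔ C = 0 := by
    constructor
    · intro h
      have := h (0, 0)
      rw [planeWave] at this
      exact (mul_eq_zero.mp this).resolve_right (Complex.exp_ne_zero _)
    · intro h p; rw [planeWave, h, zero_mul]
  rw [h1, hC, mul_eq_zero, or_iff_left hA, List.map_ofFn, List.prod_ofFn,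
    Finset.prod_eq_zero_iff]
  constructor
  · rintro ⟨j, -, hj⟩
    refine ⟨j, ?_⟩
    have hj' : -(g j) * ω ^ 2 - ‖k‖ ^ 2 = 0 := by
      have : ((-(g j) * ω ^ 2 - ‖k‖ ^ 2 : ℝ) : ℂ) = 0 := by push_cast; simpa using hj
      exact_mod_cast this
    have hgj : 0 < -(g j) := by linarith [hneg j]
    have hsq : ω ^ 2 = (‖k‖ / Real.sqrt (-(g j))) ^ 2 := by
      rw [div_pow, Real.sq_sqrt hgj.le]
      rw [eq_div_iff hgj.ne']
      linear_combination hj'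
    rcases sq_eq_sq_iff_eq_or_eq_neg.mp hsq with h | h
    · exact Or.inl h
    · exact Or.inr h
  · rintro ⟨j, hj⟩
    refine ⟨j, Finset.mem_univ j, ?_⟩
    have hgj : 0 < -(g j) := by linarith [hneg j]
    have hsq : ω ^ 2 = ‖k‖ ^ 2 / (-(g j)) := by
      rcases hj with h | h <;> rw [h] <;>
        simp [div_pow, Real.sq_sqrt hgj.le, neg_pow]
    have h0 : -(g j) * ω ^ 2 - ‖k‖ ^ 2 = 0 := by
      rw [hsq]
      have : g j ≠ 0 := by linarith
      field_simp
      ring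
    have h0' : ((-(g j) * ω ^ 2 - ‖k‖ ^ 2 : ℝ) : ℂ) = 0 := by exact_mod_cast h0
    show -((g j : ℝ) : ℂ) * (ω : ℂ) ^ 2 - ((‖k‖ ^ 2 : ℝ) : ℂ) = 0
    push_cast at h0' ⊢
    linear_combination h0'
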